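/- Let g : X × ℝ^d → ℝ^d and suppose Cov(gᵢ(x,·), gⱼ(x',·)) (over the randomness of a GP prior on g) has the LMC form ∑ᵣ bᵣ bᵣᵀ kᵣ with orthonormal bᵣ. Then for ĝ(x,w) := Bᵀ g(x, B' w) with B = [b₁,…,b_R], the components ĝᵣ are mutually uncorrelated, with Cov(ĝᵣ(x,w), ĝ_{r'}(x',w')) = δ_{rr'} kᵣ((x, B'w), (x', B'w')). -/
import Mathlib


open Matrix MeasureTheory

/-- Theorem 1 of the paper: if the autoregressive map `g` has an LMC covariance
`∑ᵣ bᵣ bᵣᵀ kᵣ` with orthonormal bases, then the projected map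
`ĝ(x,w) = Bᵀ g(x, B'w)` has mutually uncorrelated components, with
`Cov(ĝᵣ(x,w), ĝ_{r'}(x',w')) = δ_{rr'} kᵣ((x,B'w),(x',B'w'))`. -/
theorem projected_autoregressive_decomposes {Ω X : Type*} [MeasureSpace Ω]
    (hprob : IsProbabilityMeasure (volume : Measure Ω))
    {d R R' : ℕ}
    (g : Ω → X → (Fin d → ℝ) → Fin d → ℝ)
    (b : Fin R → Fin d → ℝ)
    (horth : ∀ r r', b r ⬝ᵥ b r' = if r = r' then 1 else 0)
    (k : Fin R → (X × (Fin d → ℝ)) → (X × (Fin d → ℝ)) → ℝ)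
    (hint : ∀ x w x' w' i j,
      Integrable (fun ω => g ω x w i * g ω x' w' j))
    (hmean : ∀ x w i, (∫ ω, g ω x w i) = 0)
    (hcov : ∀ x w x' w' i j, (∫ ω, g ω x w i * g ω x' w' j) =
      ∑ r, b r i * b r j * k r (x, w) (x', w'))
    (B' : Matrix (Fin d) (Fin R') ℝ)
    (ghat : Ω → X → (Fin R' → ℝ) → Fin R → ℝ)
    (hghat : ∀ ω x w r, ghat ω x w r = b r ⬝ᵥ g ω x (B'.mulVec w)) :
    ∀ x w x' w' r r',
      (∫ ω, ghat ω x w r * ghat ω x' w' r') =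
        if r = r' then k r (x, B'.mulVec w) (x', B'.mulVec w') else 0 := by
  intro x w x' w' r r'
  set v := B'.mulVec w
  set v' := B'.mulVec w'
  have key : (∫ ω, ghat ω x w r * ghat ω x' w' r') =
      ∑ i, ∑ j, b r i * b r' j * ∫ ω, g ω x v i * g ω x' v' j := by
    have h1 : (fun ω => ghat ω x w r * ghat ω x' w' r') =
        fun ω => ∑ i, ∑ j, b r i * b r' j * (g ω x v i * g ω x' v' j) := by
      funext ω
      rw [hghat, hghat, dotProduct, dotProduct, Finset.sum_mul_sum]
      apply Finset.sum_congr rfl; intro i _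
      apply Finset.sum_congr rfl; intro j _
      ring
    rw [h1, integral_finset_sum]
    · apply Finset.sum_congr rfl; intro i _
      rw [integral_finset_sum]
      · apply Finset.sum_congr rfl; intro j _
        rw [integral_const_mul]
      · intro j _
        exact ((hint x v x' v' i j).const_mul _)
    · intro i _
      apply integrable_finset_sum
      intro j _
      exact ((hint x v x' v' i j).const_mul _)
  rw [key]
  have hc : ∀ i j, (∫ ω, g ω x v i * g ω x' v' j) =
      ∑ s, b s i * b s j * k s (x, v) (x', v') := fun i j => hcov x v x' v' i j
  calc ∑ i, ∑ j, b r i * b r' j * ∫ ω, g ω x v i * g ω x' v' j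
      = ∑ i, ∑ j, ∑ s, b r i * b r' j * (b s i * b s j * k s (x,v) (x',v')) := by
        simp_rw [hc, Finset.mul_sum]
    _ = ∑ s, ∑ i, ∑ j, b r i * b r' j * (b s i * b s j * k s (x,v) (x',v')) := by
        have h2 : ∀ i : Fin d, ∑ j, ∑ s, b r i * b r' j * (b s i * b s j * k s (x,v) (x',v'))
            = ∑ s, ∑ j, b r i * b r' j * (b s i * b s j * k s (x,v) (x',v')) :=
          fun i => Finset.sum_comm
        simp_rw [h2]
        exact Finset.sum_comm
    _ = ∑ s, (b r ⬝ᵥ b s) * ((b r' ⬝ᵥ b s) * k s (x,v) (x',v')) := by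
        apply Finset.sum_congr rfl; intro s _
        rw [dotProduct, dotProduct, ← mul_assoc, Finset.sum_mul_sum]
        simp_rw [Finset.sum_mul]
        apply Finset.sum_congr rfl; intro i _
        apply Finset.sum_congr rfl; intro j _
        ring
    _ = if r = r' then k r (x, v) (x', v') else 0 := by
        simp_rw [horth]
        rcases eq_or_ne r r' with h|h
        · subst h
          simp [Finset.sum_ite_eq, ite_mul, one_mul, zero_mul]
        · simp [Finset.sum_ite_eq, ite_mul, one_mul, zero_mul, h]
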